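/- The algebra A = k[x,y]/(xy, x^k - y^l) with k,l ≥ 1 is a symmetric algebra: there exists a k-linear functional φ : A → k whose kernel contains no nonzero ideal of A (equivalently, the bilinear form (a,b) ↦ φ(ab) is nondegenerate and symmetric). -/

import Mathlib

open MvPolynomial

namespace Stmt2Aux

open Finsupp

variable {K : Type*} [Field K] {k l : ℕ}

/-- The ideal `(xy, x^k - y^l)`. -/
noncomputable def Igen (K : Type*) [Field K] (k l : ℕ) : Ideal (MvPolynomial (Fin 2) K) :=
  Ideal.span {(X 0 * X 1 : MvPolynomial (Fin 2) K), X 0 ^ k - X 1 ^ l}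

lemma g1_mem : (X 0 * X 1 : MvPolynomial (Fin 2) K) ∈ Igen K k l :=
  Ideal.subset_span (by simp)

lemma g2_mem : (X 0 ^ k - X 1 ^ l : MvPolynomial (Fin 2) K) ∈ Igen K k l :=
  Ideal.subset_span (by simp)

/-- The functional picking off the coefficient of `x^k` plus that of `y^l`. -/
noncomputable def Phi (K : Type*) [Field K] (k l : ℕ) : MvPolynomial (Fin 2) K →ₗ[K] K where
  toFun p := coeff (single (0 : Fin 2) k) p + coeff (single (1 : Fin 2) l) p
  map_add' p q := by simp [coeff_add]; ring
  map_smul' c p := by simp [coeff_smul]; ring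

lemma Phi_apply (p : MvPolynomial (Fin 2) K) :
    Phi K k l p = coeff (single (0 : Fin 2) k) p + coeff (single (1 : Fin 2) l) p := rfl

lemma coeff_mul_Xpow (p : MvPolynomial (Fin 2) K) (n : Fin 2) (e : ℕ) (m : Fin 2 →₀ ℕ) :
    coeff m (p * X n ^ e) = if single n e ≤ m then coeff (m - single n e) p else 0 := by
  rw [X_pow_eq_monomial, coeff_mul_monomial']
  split <;> simp

/-- normal form -/
noncomputable def r (k l : ℕ) (p : MvPolynomial (Fin 2) K) : MvPolynomial (Fin 2) K :=
  (∑ i ∈ Finset.range (k + 1), C (coeff (single (0 : Fin 2) i) p) * X 0 ^ i)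
    + C (coeff (single (1 : Fin 2) l) p) * X 0 ^ k
    + ∑ j ∈ Finset.Ico 1 l, C (coeff (single (1 : Fin 2) j) p) * X 1 ^ j

lemma r_add (p q : MvPolynomial (Fin 2) K) : r k l (p + q) = r k l p + r k l q := by
  unfold r
  simp only [coeff_add, map_add, add_mul, Finset.sum_add_distrib]
  ring

lemma fin2_decomp (u : Fin 2 →₀ ℕ) : u = single 0 (u 0) + single 1 (u 1) := by
  ext i; fin_cases i <;> simp [Finsupp.single_apply]

lemma mono_eq0 (a : ℕ) (c : K) :
    (monomial (single (0 : Fin 2) a)) c = C c * X 0 ^ a := by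
  rw [X_pow_eq_monomial, C_mul_monomial, mul_one]

lemma mono_eq1 (b : ℕ) (c : K) :
    (monomial (single (1 : Fin 2) b)) c = C c * X 1 ^ b := by
  rw [X_pow_eq_monomial, C_mul_monomial, mul_one]

lemma mono_eq2 (a b : ℕ) (c : K) :
    (monomial (single (0 : Fin 2) a + single (1 : Fin 2) b)) c = C c * X 0 ^ a * X 1 ^ b := by
  rw [X_pow_eq_monomial, X_pow_eq_monomial, C_mul_monomial, monomial_mul]
  simp

lemma coeff0_mono0 (a i : ℕ) (c : K) :
    coeff (single (0 : Fin 2) i) ((monomial (single (0 : Fin 2) a)) c)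
      = if a = i then c else 0 := by
  rw [coeff_monomial]
  rcases eq_or_ne a i with rfl | h
  · simp
  · rw [if_neg h, if_neg fun hh => h ((Finsupp.single_injective 0).eq_iff.mp hh)]

lemma coeff1_mono0 (a j : ℕ) (hj : j ≠ 0) (c : K) :
    coeff (single (1 : Fin 2) j) ((monomial (single (0 : Fin 2) a)) c) = 0 := by
  rw [coeff_monomial, if_neg]
  intro h
  have := DFunLike.congr_fun h 1
  simp [Finsupp.single_apply] at this
  exact hj this.symm

lemma coeff1_mono1 (b j : ℕ) (c : K) :
    coeff (single (1 : Fin 2) j) ((monomial (single (1 : Fin 2) b)) c)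
      = if b = j then c else 0 := by
  rw [coeff_monomial]
  rcases eq_or_ne b j with rfl | h
  · simp
  · rw [if_neg h, if_neg fun hh => h ((Finsupp.single_injective 1).eq_iff.mp hh)]

lemma coeff0_mono1 (b i : ℕ) (hb : b ≠ 0) (c : K) :
    coeff (single (0 : Fin 2) i) ((monomial (single (1 : Fin 2) b)) c) = 0 := by
  rw [coeff_monomial, if_neg]
  intro h
  have := DFunLike.congr_fun h 1
  simp [Finsupp.single_apply] at this
  exact hb this

lemma coeff0_mono2 (a b i : ℕ) (hb : b ≠ 0) (c : K) :
    coeff (single (0 : Fin 2) i)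
      ((monomial (single (0 : Fin 2) a + single (1 : Fin 2) b)) c) = 0 := by
  rw [coeff_monomial, if_neg]
  intro h
  have := DFunLike.congr_fun h 1
  simp [Finsupp.single_apply] at this
  exact hb this

lemma coeff1_mono2 (a b j : ℕ) (ha : a ≠ 0) (c : K) :
    coeff (single (1 : Fin 2) j)
      ((monomial (single (0 : Fin 2) a + single (1 : Fin 2) b)) c) = 0 := by
  rw [coeff_monomial, if_neg]
  intro h
  have := DFunLike.congr_fun h 0
  simp [Finsupp.single_apply] at this
  exact ha this

lemma sum_ite_CX (a N : ℕ) (c : K) (haN : a < N) (n : Fin 2) :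
    ∑ i ∈ Finset.range N, C (if a = i then c else 0) * X n ^ i = C c * X n ^ a := by
  have : ∀ i ∈ Finset.range N,
      C (if a = i then c else 0) * X n ^ i
        = if a = i then C c * (X n : MvPolynomial (Fin 2) K) ^ i else 0 := by
    intro i _
    split <;> simp
  rw [Finset.sum_congr rfl this, Finset.sum_ite_eq, if_pos (Finset.mem_range.mpr haN)]

lemma monomial_sub_r_mem (hk : 1 ≤ k) (hl : 1 ≤ l) (a b : ℕ) (c : K) :
    (monomial (single (0 : Fin 2) a + single (1 : Fin 2) b)) c
      - r k l ((monomial (single (0 : Fin 2) a + single (1 : Fin 2) b)) c) ∈ Igen K k l := by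
  rcases Nat.eq_zero_or_pos b with rfl | hb
  · rw [Finsupp.single_zero, add_zero]
    have h3 : ∑ j ∈ Finset.Ico 1 l,
        C (coeff (single (1 : Fin 2) j) ((monomial (single (0 : Fin 2) a)) c)) * (X 1 ^ j : MvPolynomial (Fin 2) K)
          = 0 := by
      refine Finset.sum_eq_zero fun j hj => ?_
      obtain ⟨hj1, _⟩ := Finset.mem_Ico.mp hj
      rw [coeff1_mono0 a j (by omega) c, map_zero, zero_mul]
    rcases le_or_gt a k with hak | hak
    · have hr : r k l ((monomial (single (0 : Fin 2) a)) c) = C c * X 0 ^ a := by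
        unfold r
        rw [h3, add_zero, coeff1_mono0 a l (by omega) c, map_zero, zero_mul, add_zero]
        rw [Finset.sum_congr rfl fun i _ => by rw [coeff0_mono0]]
        exact sum_ite_CX a (k + 1) c (by omega) 0
      rw [hr, mono_eq0, sub_self]
      exact zero_mem _
    · have hr : r k l ((monomial (single (0 : Fin 2) a)) c) = 0 := by
        unfold r
        rw [h3, add_zero, coeff1_mono0 a l (by omega) c, map_zero, zero_mul, add_zero]
        refine Finset.sum_eq_zero fun i hi => ?_
        rw [coeff0_mono0, if_neg (by have := Finset.mem_range.mp hi; omega), map_zero, zero_mul]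
      rw [hr, sub_zero, mono_eq0]
      obtain ⟨a', rfl⟩ : ∃ a', a = k + a' + 1 := ⟨a - k - 1, by omega⟩
      obtain ⟨l', rfl⟩ : ∃ l', l = l' + 1 := ⟨l - 1, by omega⟩
      have : (C c * X 0 ^ (k + a' + 1) : MvPolynomial (Fin 2) K)
          = (C c * X 0 ^ a' * X 1 ^ l') * (X 0 * X 1)
            + (C c * X 0 ^ (a' + 1)) * (X 0 ^ k - X 1 ^ (l' + 1)) := by
        ring
      rw [this]
      exact add_mem (Ideal.mul_mem_left _ _ g1_mem) (Ideal.mul_mem_left _ _ g2_mem)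
  · rcases Nat.eq_zero_or_pos a with rfl | ha
    · rw [Finsupp.single_zero, zero_add]
      have h1 : ∑ i ∈ Finset.range (k + 1),
          C (coeff (single (0 : Fin 2) i) ((monomial (single (1 : Fin 2) b)) c))
              * (X 0 ^ i : MvPolynomial (Fin 2) K) = 0 := by
        refine Finset.sum_eq_zero fun i _ => ?_
        rw [coeff0_mono1 b i (by omega) c, map_zero, zero_mul]
      rcases lt_trichotomy b l with hbl | heq | hbl
      · have hr : r k l ((monomial (single (1 : Fin 2) b)) c) = C c * X 1 ^ b := by
          unfold r
          rw [h1, zero_add, coeff1_mono1, if_neg (by omega), map_zero, zero_mul, zero_add]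
          rw [Finset.sum_congr rfl fun j _ => by rw [coeff1_mono1]]
          have : ∀ j ∈ Finset.Ico 1 l,
              C (if b = j then c else 0) * X 1 ^ j
                = if b = j then C c * (X 1 : MvPolynomial (Fin 2) K) ^ j else 0 := by
            intro j _; split <;> simp
          rw [Finset.sum_congr rfl this, Finset.sum_ite_eq,
            if_pos (Finset.mem_Ico.mpr ⟨by omega, hbl⟩)]
        rw [hr, mono_eq1, sub_self]
        exact zero_mem _
      · subst heq
        have hr : r k b ((monomial (single (1 : Fin 2) b)) c) = C c * X 0 ^ k := by
          unfold r
          rw [h1, zero_add, coeff1_mono1, if_pos rfl]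
          have h2 : ∑ j ∈ Finset.Ico 1 b,
              C (coeff (single (1 : Fin 2) j) ((monomial (single (1 : Fin 2) b)) c))
                  * (X 1 ^ j : MvPolynomial (Fin 2) K) = 0 := by
            refine Finset.sum_eq_zero fun j hj => ?_
            obtain ⟨_, hj2⟩ := Finset.mem_Ico.mp hj
            rw [coeff1_mono1, if_neg (by omega), map_zero, zero_mul]
          rw [h2, add_zero]
        rw [hr, mono_eq1]
        have e : (C c * X 1 ^ b - C c * X 0 ^ k : MvPolynomial (Fin 2) K)
            = (-C c) * (X 0 ^ k - X 1 ^ b) := by ring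
        rw [e]
        exact Ideal.mul_mem_left _ _ g2_mem
      · have hr : r k l ((monomial (single (1 : Fin 2) b)) c) = 0 := by
          unfold r
          rw [h1, zero_add, coeff1_mono1, if_neg (by omega), map_zero, zero_mul, zero_add]
          refine Finset.sum_eq_zero fun j hj => ?_
          obtain ⟨_, hj2⟩ := Finset.mem_Ico.mp hj
          rw [coeff1_mono1, if_neg (by omega), map_zero, zero_mul]
        rw [hr, sub_zero, mono_eq1]
        obtain ⟨b', rfl⟩ : ∃ b', b = l + b' + 1 := ⟨b - l - 1, by omega⟩
        obtain ⟨k', rfl⟩ : ∃ k', k = k' + 1 := ⟨k - 1, by omega⟩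
        have : (C c * X 1 ^ (l + b' + 1) : MvPolynomial (Fin 2) K)
            = (C c * X 1 ^ b' * X 0 ^ k') * (X 0 * X 1)
              + (-(C c * X 1 ^ (b' + 1))) * (X 0 ^ (k' + 1) - X 1 ^ l) := by
          ring
        rw [this]
        exact add_mem (Ideal.mul_mem_left _ _ g1_mem) (Ideal.mul_mem_left _ _ g2_mem)
    · have hr : r k l ((monomial (single (0 : Fin 2) a + single (1 : Fin 2) b)) c) = 0 := by
        unfold r
        have h1 : ∑ i ∈ Finset.range (k + 1),
            C (coeff (single (0 : Fin 2) i)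
              ((monomial (single (0 : Fin 2) a + single (1 : Fin 2) b)) c))
                * (X 0 ^ i : MvPolynomial (Fin 2) K) = 0 := by
          refine Finset.sum_eq_zero fun i _ => ?_
          rw [coeff0_mono2 a b i (by omega) c, map_zero, zero_mul]
        have h3 : ∑ j ∈ Finset.Ico 1 l,
            C (coeff (single (1 : Fin 2) j)
              ((monomial (single (0 : Fin 2) a + single (1 : Fin 2) b)) c))
                * (X 1 ^ j : MvPolynomial (Fin 2) K) = 0 := by
          refine Finset.sum_eq_zero fun j _ => ?_
          rw [coeff1_mono2 a b j (by omega) c, map_zero, zero_mul]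
        rw [h1, h3, zero_add, add_zero, coeff1_mono2 a b l (by omega) c, map_zero, zero_mul]
      rw [hr, sub_zero, mono_eq2]
      obtain ⟨a', rfl⟩ : ∃ a', a = a' + 1 := ⟨a - 1, by omega⟩
      obtain ⟨b', rfl⟩ : ∃ b', b = b' + 1 := ⟨b - 1, by omega⟩
      have : (C c * X 0 ^ (a' + 1) * X 1 ^ (b' + 1) : MvPolynomial (Fin 2) K)
          = (C c * X 0 ^ a' * X 1 ^ b') * (X 0 * X 1) := by ring
      rw [this]
      exact Ideal.mul_mem_left _ _ g1_mem

lemma sub_r_mem (hk : 1 ≤ k) (hl : 1 ≤ l) (p : MvPolynomial (Fin 2) K) :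
    p - r k l p ∈ Igen K k l := by
  induction p using MvPolynomial.induction_on' with
  | monomial u c =>
    have h := monomial_sub_r_mem hk hl (u 0) (u 1) c
    rwa [← fin2_decomp u] at h
  | add p q hp hq =>
    have : p + q - r k l (p + q) = (p - r k l p) + (q - r k l q) := by
      rw [r_add]; ring
    rw [this]
    exact add_mem hp hq

lemma r_eq_zero (p : MvPolynomial (Fin 2) K)
    (h0 : ∀ i < k, coeff (single (0 : Fin 2) i) p = 0)
    (hkk : coeff (single (0 : Fin 2) k) p + coeff (single (1 : Fin 2) l) p = 0)
    (h1 : ∀ j, 1 ≤ j → j < l → coeff (single (1 : Fin 2) j) p = 0) :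
    r k l p = 0 := by
  unfold r
  rw [Finset.sum_range_succ]
  have e1 : ∑ i ∈ Finset.range k,
      C (coeff (single (0 : Fin 2) i) p) * (X 0 ^ i : MvPolynomial (Fin 2) K) = 0 :=
    Finset.sum_eq_zero fun i hi => by
      rw [h0 i (Finset.mem_range.mp hi), map_zero, zero_mul]
  have e3 : ∑ j ∈ Finset.Ico 1 l,
      C (coeff (single (1 : Fin 2) j) p) * (X 1 ^ j : MvPolynomial (Fin 2) K) = 0 :=
    Finset.sum_eq_zero fun j hj => by
      obtain ⟨hj1, hj2⟩ := Finset.mem_Ico.mp hj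
      rw [h1 j hj1 hj2, map_zero, zero_mul]
  rw [e1, zero_add, e3, add_zero, ← add_mul, ← map_add, hkk, map_zero, zero_mul]

lemma Phi_mul_X0pow (p : MvPolynomial (Fin 2) K) (i : ℕ) (hik : i < k) :
    Phi K k l (p * X 0 ^ (k - i)) = coeff (single (0 : Fin 2) i) p := by
  rw [Phi_apply, coeff_mul_Xpow, coeff_mul_Xpow]
  rw [if_pos (Finsupp.single_le_iff.mpr (by simp))]
  rw [if_neg (fun h => by
    have := Finsupp.single_le_iff.mp h
    simp [Finsupp.single_apply] at this
    omega)]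
  rw [add_zero, ← Finsupp.single_tsub]
  congr 2
  omega

lemma Phi_mul_X1pow (hk : 1 ≤ k) (p : MvPolynomial (Fin 2) K) (j : ℕ) (hjl : j < l) :
    Phi K k l (p * X 1 ^ (l - j)) = coeff (single (1 : Fin 2) j) p := by
  rw [Phi_apply, coeff_mul_Xpow, coeff_mul_Xpow]
  rw [if_neg (fun h => by
    have := Finsupp.single_le_iff.mp h
    simp [Finsupp.single_apply] at this
    omega)]
  rw [if_pos (Finsupp.single_le_iff.mpr (by simp))]
  rw [zero_add, ← Finsupp.single_tsub]
  congr 2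
  omega

lemma Phi_ker (hk : 1 ≤ k) (hl : 1 ≤ l) (p : MvPolynomial (Fin 2) K)
    (hp : p ∈ Igen K k l) : Phi K k l p = 0 := by
  obtain ⟨u, v, huv⟩ := Ideal.mem_span_pair.mp hp
  rw [← huv, map_add]
  have e : (X 0 * X 1 : MvPolynomial (Fin 2) K)
      = monomial (single (0 : Fin 2) 1 + single (1 : Fin 2) 1) 1 := by
    rw [← pow_one (X 0 : MvPolynomial (Fin 2) K), ← pow_one (X 1 : MvPolynomial (Fin 2) K),
      X_pow_eq_monomial, X_pow_eq_monomial, monomial_mul, one_mul]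
  have hg1 : Phi K k l (u * (X 0 * X 1)) = 0 := by
    rw [Phi_apply, e, coeff_mul_monomial', coeff_mul_monomial']
    rw [if_neg (fun h => by
      have := Finsupp.le_def.mp h 1
      simp [Finsupp.single_apply] at this)]
    rw [if_neg (fun h => by
      have := Finsupp.le_def.mp h 0
      simp [Finsupp.single_apply] at this)]
    rw [add_zero]
  have hg2 : Phi K k l (v * (X 0 ^ k - X 1 ^ l)) = 0 := by
    rw [mul_sub, map_sub, Phi_apply, Phi_apply, coeff_mul_Xpow, coeff_mul_Xpow,
      coeff_mul_Xpow, coeff_mul_Xpow]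
    rw [if_pos le_rfl, if_pos le_rfl]
    rw [if_neg (fun h => by
      have := Finsupp.single_le_iff.mp h
      simp [Finsupp.single_apply] at this
      omega)]
    rw [if_neg (fun h => by
      have := Finsupp.single_le_iff.mp h
      simp [Finsupp.single_apply] at this
      omega)]
    rw [tsub_self, tsub_self]
    ring
  rw [hg1, hg2, add_zero]

end Stmt2Aux

/-- `A = k[x,y]/(xy, x^k - y^l)` with `k, l ≥ 1` is a symmetric algebra: there is a linear
functional `φ : A → k` such that the (automatically symmetric, associative) bilinear form
`(a, b) ↦ φ (a * b)` is nondegenerate; equivalently `ker φ` contains no nonzero ideal. -/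
theorem stmt_2 (K : Type*) [Field K] (k l : ℕ) (hk : 1 ≤ k) (hl : 1 ≤ l) :
    ∃ φ : (MvPolynomial (Fin 2) K ⧸
        Ideal.span {(X 0 * X 1 : MvPolynomial (Fin 2) K), X 0 ^ k - X 1 ^ l}) →ₗ[K] K,
      (∀ a b, φ (a * b) = φ (b * a)) ∧
      (∀ a, a ≠ 0 → ∃ b, φ (a * b) ≠ 0) := by
  classical
  show ∃ φ : (MvPolynomial (Fin 2) K ⧸ Stmt2Aux.Igen K k l) →ₗ[K] K,
      (∀ a b, φ (a * b) = φ (b * a)) ∧ (∀ a, a ≠ 0 → ∃ b, φ (a * b) ≠ 0)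
  open Stmt2Aux in
  have hker : Submodule.restrictScalars K (Igen K k l) ≤ LinearMap.ker (Phi K k l) := by
    intro p hp
    rw [LinearMap.mem_ker]
    exact Phi_ker hk hl p ((Submodule.restrictScalars_mem K _ p).mp hp)
  let φ : (MvPolynomial (Fin 2) K ⧸ Stmt2Aux.Igen K k l) →ₗ[K] K :=
    (Submodule.liftQ ((Stmt2Aux.Igen K k l).restrictScalars K) (Stmt2Aux.Phi K k l) hker) ∘ₗ
      (Submodule.Quotient.restrictScalarsEquiv K (Stmt2Aux.Igen K k l)).symm.toLinearMap
  have hφ : ∀ p, φ (Ideal.Quotient.mk (Stmt2Aux.Igen K k l) p) = Stmt2Aux.Phi K k l p := by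
    intro p
    show (Submodule.liftQ _ _ hker)
      ((Submodule.Quotient.restrictScalarsEquiv K (Stmt2Aux.Igen K k l)).symm
        (Submodule.Quotient.mk p)) = _
    rw [Submodule.Quotient.restrictScalarsEquiv_symm_mk, Submodule.liftQ_apply]
  refine ⟨φ, fun a b => congrArg φ (mul_comm a b), ?_⟩
  intro a ha
  obtain ⟨p, rfl⟩ := Ideal.Quotient.mk_surjective a
  have hpI : p ∉ Stmt2Aux.Igen K k l := fun h => ha (Ideal.Quotient.eq_zero_iff_mem.mpr h)
  by_contra hcon
  push_neg at hcon
  apply hpI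
  have hq : ∀ q, Stmt2Aux.Phi K k l (p * q) = 0 := by
    intro q
    have := hcon (Ideal.Quotient.mk _ q)
    rwa [← map_mul, hφ] at this
  have h0 : ∀ i < k, MvPolynomial.coeff (Finsupp.single (0 : Fin 2) i) p = 0 := by
    intro i hi
    rw [← Stmt2Aux.Phi_mul_X0pow p i hi]
    exact hq _
  have hkk : MvPolynomial.coeff (Finsupp.single (0 : Fin 2) k) p
      + MvPolynomial.coeff (Finsupp.single (1 : Fin 2) l) p = 0 := by
    have := hq 1
    rwa [mul_one, Stmt2Aux.Phi_apply] at this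
  have h1 : ∀ j, 1 ≤ j → j < l → MvPolynomial.coeff (Finsupp.single (1 : Fin 2) j) p = 0 := by
    intro j _ hj
    rw [← Stmt2Aux.Phi_mul_X1pow hk p j hj]
    exact hq _
  have hr0 : Stmt2Aux.r k l p = 0 := Stmt2Aux.r_eq_zero p h0 hkk h1
  have hsub := Stmt2Aux.sub_r_mem hk hl p
  rwa [hr0, sub_zero] at hsub
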